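/- For all (a, x), (b, y) ∈ ℝ × Y₀ one has d(A(a, x), A(b, y)) ≤ 2π · D((a, x), (b, y)), where D((a, x), (b, y)) = max(|a − b|, ρ(x, y)). -/

import Mathlib

open scoped Real
noncomputable section

/-- `X = ∏_{l≥0} ℝ/r^l ℤ`, with coordinatewise addition and the product topology. -/
abbrev SolX (r : ℕ) := (l : ℕ) → AddCircle ((r : ℝ) ^ l)

/-- The natural homomorphism `ℝ/r^{l+1}ℤ → ℝ/r^l ℤ` induced by the identity on `ℝ`. -/
def natHom (r l : ℕ) : AddCircle ((r : ℝ) ^ (l + 1)) →+ AddCircle ((r : ℝ) ^ l) :=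
  QuotientAddGroup.map _ _ (AddMonoidHom.id ℝ) (by
    intro x hx
    rw [AddSubgroup.mem_comap]
    obtain ⟨k, hk⟩ := AddSubgroup.mem_zmultiples_iff.mp hx
    refine AddSubgroup.mem_zmultiples_iff.mpr ⟨k * (r : ℤ), ?_⟩
    simp only [AddMonoidHom.id_apply, zsmul_eq_mul] at hk ⊢
    rw [← hk]
    push_cast
    ring)

/-- `x ∈ X` is a coherent sequence if `x l` is the image of `x (l+1)` under the natural
homomorphism, for every `l`. -/
def Coherent (r : ℕ) (x : SolX r) : Prop := ∀ l, natHom r l (x (l + 1)) = x l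

/-- The diagonal map `q : ℝ → X`, `q(a) = (a mod r^l ℤ)_{l≥0}`. -/
def qmap (r : ℕ) (a : ℝ) : SolX r := fun _ => (a : AddCircle _)

/-- The standard isomorphism `φ_l : ℝ/r^l ℤ → 𝕋 ⊆ ℂ`, `φ_l(a mod r^l ℤ) = exp(2πi r^{-l} a)`,
viewed as a complex-valued function. -/
def phi (r l : ℕ) (x : AddCircle ((r : ℝ) ^ l)) : ℂ := (AddCircle.toCircle x : ℂ)

/-- The `l`-th term `r^{-l} |φ_l(x_l) - φ_l(y_l)|`. -/
def dterm (r : ℕ) (x y : SolX r) (l : ℕ) : ℝ :=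
  ((r : ℝ) ^ l)⁻¹ * ‖phi r l (x l) - phi r l (y l)‖

/-- `d(x,y) = max_{l ≥ 0} r^{-l} |φ_l(x_l) - φ_l(y_l)|`. -/
def dX (r : ℕ) (x y : SolX r) : ℝ := ⨆ l, dterm r x y l

/-- `X₀ = ∏_{l≥1} ℤ/r^l ℤ`; the coordinate indexed by `l : ℕ` here is the factor
`ℤ/r^(l+1) ℤ` (paper index `l+1`).  Each factor carries the discrete topology, and `X₀`
the product topology. -/
abbrev X0 (r : ℕ) := (l : ℕ) → ZMod (r ^ (l + 1))

/-- For `x ≠ y`, the (`0`-based) index of the first coordinate where `x` and `y` differ;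
in the paper's (`1`-based) notation this is `l(x,y) - 1`. -/
def firstDiff (r : ℕ) (x y : X0 r) : ℕ := sInf {n | x n ≠ y n}

open Classical in
/-- `ρ(x,y) = r^{-l(x,y)+1}`, and `ρ(x,x) = 0`. -/
def rho (r : ℕ) (x y : X0 r) : ℝ :=
  if x = y then 0 else ((r : ℝ) ^ firstDiff r x y)⁻¹

/-- The identification of `X₀` with a subset of `X`: the `l = 0` coordinate is `0` in `ℝ/ℤ`,
and for `l ≥ 1` the coordinate `x_l ∈ ℤ/r^l ℤ` is regarded as an element of `ℝ/r^l ℤ`. -/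
def emb (r : ℕ) (x : X0 r) : SolX r
  | 0 => 0
  | (l + 1) => (((x l).val : ℝ) : AddCircle ((r : ℝ) ^ (l + 1)))

/-- `x ∈ X₀` is a coherent sequence if `x l` is the image of `x (l+1)` under the natural
ring homomorphism `ℤ/r^{l+2}ℤ → ℤ/r^{l+1}ℤ`, for every `l`. -/
def Coherent0 (r : ℕ) (x : X0 r) : Prop :=
  ∀ l, ZMod.castHom (pow_dvd_pow r (Nat.le_succ (l + 1))) (ZMod (r ^ (l + 1))) (x (l + 1)) = x l

/-- The mapping `A : ℝ × Y₀ → Y`, `A(a,x) = q(a) + x`. -/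
def Amap (r : ℕ) (a : ℝ) (x : X0 r) : SolX r := qmap r a + emb r x

/-- The metric `D((a,x),(b,y)) = max(|a-b|, ρ(x,y))` on `ℝ × Y₀`. -/
def Dmet (r : ℕ) (a b : ℝ) (x y : X0 r) : ℝ := max |a - b| (rho r x y)


lemma chord_le_one' (θ : ℝ) : ‖Complex.exp (θ * Complex.I) - 1‖ ≤ |θ| := by
  rw [Complex.exp_mul_I]
  have h1 : Complex.cos θ + Complex.sin θ * Complex.I - 1
      = ((Real.cos θ - 1 : ℝ) : ℂ) + (Real.sin θ : ℝ) * Complex.I := by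
    push_cast; ring
  rw [h1, Complex.norm_add_mul_I]
  have hs := Real.sin_sq_add_cos_sq θ
  have h2 : (Real.cos θ - 1) ^ 2 + Real.sin θ ^ 2 = 4 * ((1 - Real.cos θ) / 2) := by nlinarith
  rw [h2, Real.sqrt_mul (by norm_num : (0:ℝ) ≤ 4), show (4:ℝ) = 2 ^ 2 by norm_num,
    Real.sqrt_sq (by norm_num : (0:ℝ) ≤ 2), ← Real.abs_sin_half]
  calc 2 * |Real.sin (θ / 2)| ≤ 2 * |θ / 2| := by
        have := Real.abs_sin_le_abs (x := θ / 2); linarith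
    _ = |θ| := by rw [abs_div]; norm_num; ring

lemma chord_le' (s t : ℝ) :
    ‖Complex.exp (s * Complex.I) - Complex.exp (t * Complex.I)‖ ≤ |s - t| := by
  have h : Complex.exp (s * Complex.I) - Complex.exp (t * Complex.I)
      = Complex.exp (t * Complex.I) * (Complex.exp ((s - t : ℝ) * Complex.I) - 1) := by
    rw [mul_sub, ← Complex.exp_add, mul_one]; push_cast; ring_nf
  rw [h, norm_mul, Complex.norm_exp_ofReal_mul_I, one_mul]
  exact chord_le_one' (s - t)

lemma phi_coe' (r l : ℕ) (s : ℝ) :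
    phi r l ((s : ℝ) : AddCircle ((r:ℝ)^l))
      = Complex.exp ((2 * Real.pi / (r:ℝ)^l * s : ℝ) * Complex.I) := by
  rw [phi, AddCircle.toCircle_apply_mk, Circle.coe_exp]

lemma phi_diff_le' (r l : ℕ) (s t : ℝ) :
    ‖phi r l ((s : ℝ) : AddCircle ((r:ℝ)^l)) - phi r l ((t : ℝ) : AddCircle ((r:ℝ)^l))‖
      ≤ 2 * Real.pi / (r:ℝ)^l * |s - t| := by
  rw [phi_coe', phi_coe']
  refine (chord_le' _ _).trans_eq ?_
  rw [show 2 * Real.pi / (r:ℝ)^l * s - 2 * Real.pi / (r:ℝ)^l * t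
      = 2 * Real.pi / (r:ℝ)^l * (s - t) by ring, abs_mul, abs_of_nonneg (by positivity)]

/-- Real-valued version of `emb`. -/
def embR (r : ℕ) (x : X0 r) : ℕ → ℝ
  | 0 => 0
  | (l + 1) => ((x l).val : ℝ)

lemma amap_apply' (r : ℕ) (a : ℝ) (x : X0 r) :
    ∀ l, Amap r a x l = ((a + embR r x l : ℝ) : AddCircle ((r:ℝ)^l))
  | 0 => by simp [Amap, qmap, emb, embR]
  | (m+1) => by
      show ((a : ℝ) : AddCircle ((r:ℝ)^(m+1))) + _ = _
      simp [emb, embR]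

lemma agree_bound' (r l : ℕ) (hr1 : 1 ≤ (r:ℝ)) (a b v : ℝ) :
    ((r : ℝ) ^ l)⁻¹ * ‖
        (phi r l ((a + v : ℝ) : AddCircle ((r:ℝ)^l)) - phi r l ((b + v : ℝ) : AddCircle ((r:ℝ)^l)))‖
      ≤ 2 * Real.pi * |a - b| := by
  have hP : (1:ℝ) ≤ (r:ℝ)^l := one_le_pow₀ hr1
  have h := phi_diff_le' r l (a + v) (b + v)
  rw [show a + v - (b + v) = a - b by ring] at h
  calc ((r : ℝ) ^ l)⁻¹ * ‖_‖
      ≤ ((r : ℝ) ^ l)⁻¹ * (2 * Real.pi / (r:ℝ)^l * |a - b|) :=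
        mul_le_mul_of_nonneg_left h (by positivity)
    _ ≤ 1 * (2 * Real.pi * |a - b|) := by
        refine mul_le_mul (inv_le_one_of_one_le₀ hP) ?_ (by positivity) (by norm_num)
        exact mul_le_mul_of_nonneg_right (div_le_self (by positivity) hP) (abs_nonneg _)
    _ = 2 * Real.pi * |a - b| := one_mul _

/-- `d(A(a,x), A(b,y)) ≤ 2π D((a,x),(b,y))` for all `(a,x), (b,y) ∈ ℝ × Y₀`. -/
theorem stmt_11 (r : ℕ) (hr : 2 ≤ r) :
    ∀ (a b : ℝ) (x y : X0 r), Coherent0 r x → Coherent0 r y →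
      dX r (Amap r a x) (Amap r b y) ≤ 2 * Real.pi * Dmet r a b x y := by
  intro a b x y _ _
  have hr1 : (1:ℝ) ≤ (r:ℝ) := by exact_mod_cast hr.trans' (by norm_num)
  have hr2 : (2:ℝ) ≤ (r:ℝ) := by exact_mod_cast hr
  have hπ : (1:ℝ) ≤ Real.pi := by linarith [Real.pi_gt_three]
  have hD1 : |a - b| ≤ Dmet r a b x y := le_max_left _ _
  have hD2 : rho r x y ≤ Dmet r a b x y := le_max_right _ _
  have hDnn : 0 ≤ Dmet r a b x y := le_trans (abs_nonneg _) hD1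
  refine ciSup_le fun l => ?_
  have habD : 2 * Real.pi * |a - b| ≤ 2 * Real.pi * Dmet r a b x y :=
    mul_le_mul_of_nonneg_left hD1 (by positivity)
  match l with
  | 0 =>
    simp only [dterm, amap_apply', embR]
    exact le_trans (agree_bound' r 0 hr1 a b 0) habD
  | (m+1) =>
    by_cases hm : x m = y m
    · simp only [dterm, amap_apply', embR, hm]
      exact le_trans (agree_bound' r (m+1) hr1 a b _) habD
    · have hxy : x ≠ y := fun h => hm (congrFun h m)
      have hf : firstDiff r x y ≤ m := Nat.sInf_le hm
      set f := firstDiff r x y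
      have hfpos : (0:ℝ) < (r:ℝ)^f := by positivity
      have hPpos : (0:ℝ) < (r:ℝ)^(m+1) := by positivity
      have habs : ‖phi r (m+1) (Amap r a x (m+1)) - phi r (m+1) (Amap r b y (m+1))‖ ≤ 2 := by
        have h1 : ‖phi r (m+1) (Amap r a x (m+1))‖ = 1 := Circle.norm_coe _
        have h2 : ‖phi r (m+1) (Amap r b y (m+1))‖ = 1 := Circle.norm_coe _
        calc ‖_‖ ≤ ‖phi r (m+1) (Amap r a x (m+1))‖
              + ‖phi r (m+1) (Amap r b y (m+1))‖ := by
              simpa using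
                norm_sub_le (phi r (m+1) (Amap r a x (m+1))) (phi r (m+1) (Amap r b y (m+1)))
          _ = 2 := by rw [h1, h2]; norm_num
      have hP : 2 * (r:ℝ)^f ≤ (r:ℝ)^(m+1) := by
        calc 2 * (r:ℝ)^f ≤ (r:ℝ) * (r:ℝ)^f := mul_le_mul_of_nonneg_right hr2 hfpos.le
          _ = (r:ℝ)^(f+1) := by rw [pow_succ]; ring
          _ ≤ (r:ℝ)^(m+1) := pow_le_pow_right₀ hr1 (by omega)
      have hkey : ((r:ℝ)^(m+1))⁻¹ * 2 ≤ ((r:ℝ)^f)⁻¹ := by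
        rw [show ((r:ℝ)^(m+1))⁻¹ * 2 = 2 / (r:ℝ)^(m+1) by ring,
          show ((r:ℝ)^f)⁻¹ = 1 / (r:ℝ)^f by ring, div_le_div_iff₀ hPpos hfpos]
        linarith
      have hrho : rho r x y = ((r:ℝ)^f)⁻¹ := if_neg hxy
      calc dterm r (Amap r a x) (Amap r b y) (m+1)
          ≤ ((r:ℝ)^(m+1))⁻¹ * 2 := mul_le_mul_of_nonneg_left habs (by positivity)
        _ ≤ ((r:ℝ)^f)⁻¹ := hkey
        _ ≤ 2 * Real.pi * ((r:ℝ)^f)⁻¹ := by nlinarith [inv_pos.mpr hfpos]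
        _ ≤ 2 * Real.pi * Dmet r a b x y := by
            rw [← hrho]; exact mul_le_mul_of_nonneg_left hD2 (by positivity)
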